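/- Let f1 : (0, ∞) → [0, ∞) be decreasing and integrable on (0, L] for every L > 0, let ξ > 0, c ≥ 0, a > 0, and let J ⊆ [0, ∞) be an interval of length |J| > 0. Let f2 : [0, ∞) → [0, c] be a measurable function vanishing outside J. Then ∫₀^{a} f1(a − u) f2(u) ξ e^{−ξ u} du ≤ c ξ ∫₀^{min(a, |J|)} f1(v) dv ≤ c ξ ∫₀^{|J|} f1(v) dv. -/

import Mathlib

open MeasureTheory

/-- Bound on the exponential-law average of a product functional `f1(a − u) f2(u)`,
where `f1` is nonnegative, decreasing and locally integrable near `0`, and `f2` is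
bounded by `c` and supported in an interval `J ⊆ [0, ∞)` of positive length. -/
theorem exp_average_product_bound
    (f1 : ℝ → ℝ)
    (hf1nonneg : ∀ x : ℝ, 0 < x → 0 ≤ f1 x)
    (hf1anti : ∀ x y : ℝ, 0 < x → x ≤ y → f1 y ≤ f1 x)
    (hf1int : ∀ L : ℝ, 0 < L → IntegrableOn f1 (Set.Ioc 0 L))
    (ξ c a : ℝ) (hξ : 0 < ξ) (hc : 0 ≤ c) (ha : 0 < a)
    (J : Set ℝ) (hJconn : J.OrdConnected) (hJsub : J ⊆ Set.Ici 0)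
    (hJlen : 0 < (volume J).toReal)
    (f2 : ℝ → ℝ) (hf2meas : Measurable f2)
    (hf2nonneg : ∀ u : ℝ, 0 ≤ u → 0 ≤ f2 u)
    (hf2le : ∀ u : ℝ, 0 ≤ u → f2 u ≤ c)
    (hf2supp : ∀ u : ℝ, u ∉ J → f2 u = 0) :
    (∫ u in (0:ℝ)..a, f1 (a - u) * f2 u * (ξ * Real.exp (-ξ * u))) ≤
        c * ξ * (∫ v in (0:ℝ)..(min a ((volume J).toReal)), f1 v) ∧
      c * ξ * (∫ v in (0:ℝ)..(min a ((volume J).toReal)), f1 v) ≤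
        c * ξ * (∫ v in (0:ℝ)..((volume J).toReal), f1 v) := by
  set ℓ : ℝ := (volume J).toReal with hℓdef
  have hℓpos : 0 < ℓ := hJlen
  set m : ℝ := min a ℓ with hmdef
  have hmpos : 0 < m := lt_min ha hℓpos
  have hcξ : 0 ≤ c * ξ := mul_nonneg hc hξ.le
  have hIf1 : ∀ L : ℝ, 0 < L → IntervalIntegrable f1 volume 0 L := fun L hL => by
    rw [intervalIntegrable_iff_integrableOn_Ioc_of_le hL.le]; exact hf1int L hL
  -- second inequality
  have h2 : (∫ v in (0:ℝ)..m, f1 v) ≤ ∫ v in (0:ℝ)..ℓ, f1 v := by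
    apply intervalIntegral.integral_mono_interval (le_refl (0:ℝ)) hmpos.le (min_le_right a ℓ)
    · filter_upwards [self_mem_ae_restrict measurableSet_Ioc] with x hx
      exact hf1nonneg x hx.1
    · exact hIf1 ℓ hℓpos
  refine ⟨?_, mul_le_mul_of_nonneg_left h2 hcξ⟩
  -- nonnegativity of the middle term
  have hRHSnn : 0 ≤ ∫ v in (0:ℝ)..m, f1 v := by
    apply intervalIntegral.integral_nonneg_of_ae_restrict hmpos.le
    have hne : ∀ᵐ x : ℝ ∂volume, x ≠ 0 := by
      rw [ae_iff]
      simp only [ne_eq, not_not]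
      have : {x : ℝ | x = 0} = {0} := by ext x; simp
      rw [this]; exact Real.volume_singleton
    filter_upwards [self_mem_ae_restrict measurableSet_Icc, ae_restrict_of_ae hne]
      with x hx hx0
    exact hf1nonneg x (lt_of_le_of_ne hx.1 (Ne.symm hx0))
  set g : ℝ → ℝ := fun u => f1 (a - u) * f2 u * (ξ * Real.exp (-ξ * u)) with hgdef
  have hLHSeq : (∫ u in (0:ℝ)..a, g u) = ∫ u in Set.Ioc 0 a, g u :=
    intervalIntegral.integral_of_le ha.le
  have hnea : ∀ᵐ x : ℝ ∂volume, x ≠ a := by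
    rw [ae_iff]
    simp only [ne_eq, not_not]
    have : {x : ℝ | x = a} = {a} := by ext x; simp
    rw [this]; exact Real.volume_singleton
  -- f2 vanishes on negatives
  have hf2bd : ∀ u : ℝ, ‖f2 u * (ξ * Real.exp (-ξ * u))‖ ≤ c * ξ := by
    intro u
    rcases le_or_gt 0 u with hu | hu
    · rw [Real.norm_eq_abs, abs_mul, abs_of_nonneg (hf2nonneg u hu),
        abs_of_nonneg (by positivity : (0:ℝ) ≤ ξ * Real.exp (-ξ * u))]
      have he : Real.exp (-ξ * u) ≤ 1 := Real.exp_le_one_iff.2 (by nlinarith)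
      have : ξ * Real.exp (-ξ * u) ≤ ξ := by nlinarith [Real.exp_pos (-ξ * u)]
      exact mul_le_mul (hf2le u hu) this (by positivity) hc
    · have : f2 u = 0 := hf2supp u (fun h => absurd (hJsub h) (by simpa using hu))
      simp [this, hcξ]
  rcases Set.eq_empty_or_nonempty (Set.Ioo 0 a ∩ J) with hS | ⟨u₀, hu₀⟩
  · -- empty case : integrand vanishes a.e.
    have : (∫ u in (0:ℝ)..a, g u) = 0 := by
      rw [hLHSeq]
      rw [setIntegral_congr_ae measurableSet_Ioc
        (g := fun _ => (0:ℝ)) ?_, integral_zero]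
      filter_upwards [hnea] with u hu hmem
      have huI : u ∈ Set.Ioo 0 a := ⟨hmem.1, lt_of_le_of_ne hmem.2 hu⟩
      have huJ : u ∉ J := fun h => (Set.eq_empty_iff_forall_notMem.1 hS) u ⟨huI, h⟩
      simp [hgdef, hf2supp u huJ]
    rw [this]
    exact mul_nonneg hcξ hRHSnn
  · have hSconn : (Set.Ioo 0 a ∩ J).OrdConnected := (Set.ordConnected_Ioo).inter hJconn
    set S : Set ℝ := Set.Ioo 0 a ∩ J with hSdef
    have hSne : S.Nonempty := ⟨u₀, hu₀⟩
    have hbddB : BddBelow S := ⟨0, fun x hx => hx.1.1.le⟩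
    have hbddA : BddAbove S := ⟨a, fun x hx => hx.1.2.le⟩
    set s : ℝ := sInf S with hsdef
    set t : ℝ := sSup S with htdef
    have hs0 : 0 ≤ s := le_csInf hSne (fun x hx => hx.1.1.le)
    have hta : t ≤ a := csSup_le hSne (fun x hx => hx.1.2.le)
    have hst : s ≤ t := csInf_le_csSup hSne hbddB hbddA
    have hSsubIcc : S ⊆ Set.Icc s t := fun x hx => ⟨csInf_le hbddB hx, le_csSup hbddA hx⟩
    have hIooSub : Set.Ioo s t ⊆ S := by
      intro x hx
      obtain ⟨p, hp, hpx⟩ := exists_lt_of_csInf_lt hSne hx.1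
      obtain ⟨q, hq, hxq⟩ := exists_lt_of_lt_csSup hSne hx.2
      exact hSconn.out hp hq ⟨hpx.le, hxq.le⟩
    -- length bound
    have hJfin : volume J ≠ ⊤ := by
      intro h
      rw [hℓdef] at hℓpos
      rw [h] at hℓpos
      simp at hℓpos
    have hlen : t - s ≤ ℓ := by
      have hv : volume (Set.Ioo s t) ≤ volume J :=
        measure_mono (hIooSub.trans Set.inter_subset_right)
      rw [Real.volume_Ioo] at hv
      have := ENNReal.toReal_mono hJfin hv
      rwa [ENNReal.toReal_ofReal (by linarith)] at this
    have hlenm : t - s ≤ m := le_min (by linarith) hlen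
    -- integrability of the reversed f1
    have hbase : IntegrableOn (fun u => f1 (a - u)) (Set.Ioc 0 a) := by
      have := (hIf1 a ha).comp_sub_left a
      simp only [sub_zero, sub_self] at this
      exact (intervalIntegrable_iff_integrableOn_Ioc_of_le ha.le).1 this.symm
    have hgint : IntegrableOn g (Set.Ioc 0 a) := by
      have h1 : Integrable (fun u => (f2 u * (ξ * Real.exp (-ξ * u))) * f1 (a - u))
          (volume.restrict (Set.Ioc 0 a)) := by
        apply hbase.bdd_mul (c := c * ξ)
        · exact (hf2meas.mul (measurable_const.mul
            ((Real.measurable_exp.comp (measurable_const.mul measurable_id))))).aestronglyMeasurable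
        · exact ae_of_all _ hf2bd
      exact h1.congr (ae_of_all _ (fun u => by simp [hgdef]; ring))
    have hindint : IntegrableOn
        (fun u => c * ξ * (Set.Ioc s t).indicator (fun u => f1 (a - u)) u)
        (Set.Ioc 0 a) :=
      ((hbase.indicator measurableSet_Ioc).const_mul (c * ξ))
    -- the pointwise a.e. bound
    have hbound : (∫ u in Set.Ioc 0 a, g u) ≤
        ∫ u in Set.Ioc 0 a, c * ξ * (Set.Ioc s t).indicator (fun u => f1 (a - u)) u := by
      apply setIntegral_mono_ae_restrict hgint hindint
      have hnes : ∀ᵐ x : ℝ ∂volume, x ≠ s := by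
        rw [ae_iff]
        simp only [ne_eq, not_not]
        have : {x : ℝ | x = s} = {s} := by ext x; simp
        rw [this]; exact Real.volume_singleton
      filter_upwards [self_mem_ae_restrict measurableSet_Ioc, ae_restrict_of_ae hnea,
        ae_restrict_of_ae hnes] with u hu hua hus
      have huIoo : u ∈ Set.Ioo 0 a := ⟨hu.1, lt_of_le_of_ne hu.2 hua⟩
      have hfa : 0 ≤ f1 (a - u) := hf1nonneg _ (by linarith [huIoo.2])
      by_cases huJ : u ∈ J
      · have huS : u ∈ S := ⟨huIoo, huJ⟩
        have huIcc : u ∈ Set.Icc s t := hSsubIcc huS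
        have huIoc : u ∈ Set.Ioc s t := ⟨lt_of_le_of_ne huIcc.1 (Ne.symm hus), huIcc.2⟩
        rw [Set.indicator_of_mem huIoc]
        have hE : ξ * Real.exp (-ξ * u) ≤ ξ := by
          nlinarith [Real.exp_pos (-ξ * u),
            Real.exp_le_one_iff.2 (by nlinarith [huIoo.1] : -ξ * u ≤ 0)]
        have hE0 : 0 ≤ ξ * Real.exp (-ξ * u) := by positivity
        have hBE : f2 u * (ξ * Real.exp (-ξ * u)) ≤ c * ξ :=
          mul_le_mul (hf2le u huIoo.1.le) hE hE0 hc
        calc f1 (a - u) * f2 u * (ξ * Real.exp (-ξ * u))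
            = f1 (a - u) * (f2 u * (ξ * Real.exp (-ξ * u))) := by ring
          _ ≤ f1 (a - u) * (c * ξ) := mul_le_mul_of_nonneg_left hBE hfa
          _ = c * ξ * f1 (a - u) := by ring
      · have : f2 u = 0 := hf2supp u huJ
        simp only [hgdef, this, mul_zero, zero_mul]
        apply mul_nonneg hcξ
        apply Set.indicator_apply_nonneg
        intro _
        exact hf1nonneg _ (by linarith [huIoo.2])
    -- compute the right-hand integral
    have hIocsub : Set.Ioc s t ⊆ Set.Ioc 0 a := Set.Ioc_subset_Ioc hs0 hta
    have hindeq : (∫ u in Set.Ioc 0 a, c * ξ * (Set.Ioc s t).indicator (fun u => f1 (a - u)) u)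
        = c * ξ * ∫ u in Set.Ioc s t, f1 (a - u) := by
      rw [integral_const_mul, setIntegral_indicator measurableSet_Ioc,
        Set.inter_eq_self_of_subset_right hIocsub]
    -- change of variables
    have hchg : (∫ u in Set.Ioc s t, f1 (a - u))
        = ∫ x in (0:ℝ)..(t - s), f1 (x + (a - t)) := by
      rw [← intervalIntegral.integral_of_le hst, intervalIntegral.integral_comp_sub_left f1 a,
        intervalIntegral.integral_comp_add_right f1 (a - t)]
      norm_num
    -- translate comparison
    have hIrevt : IntervalIntegrable (fun x => f1 (x + (a - t))) volume 0 (t - s) := by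
      have h1 : IntervalIntegrable f1 volume (a - t) (a - s) := by
        apply (hIf1 a ha).mono_set
        rw [Set.uIcc_of_le (by linarith : a - t ≤ a - s), Set.uIcc_of_le ha.le]
        exact Set.Icc_subset_Icc (by linarith) (by linarith)
      have h2 := h1.comp_add_right (a - t)
      have e1 : a - t - (a - t) = 0 := by ring
      have e2 : a - s - (a - t) = t - s := by ring
      rwa [e1, e2] at h2
    have hIf1ts : IntervalIntegrable f1 volume 0 (t - s) := by
      rw [intervalIntegrable_iff_integrableOn_Ioc_of_le (by linarith)]
      exact (hf1int m hmpos).mono_set (Set.Ioc_subset_Ioc le_rfl hlenm)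
    have htrans : (∫ x in (0:ℝ)..(t - s), f1 (x + (a - t)))
        ≤ ∫ x in (0:ℝ)..(t - s), f1 x := by
      apply intervalIntegral.integral_mono_ae_restrict (by linarith) hIrevt hIf1ts
      · have hne0 : ∀ᵐ x : ℝ ∂volume, x ≠ 0 := by
          rw [ae_iff]
          simp only [ne_eq, not_not]
          have : {x : ℝ | x = 0} = {0} := by ext x; simp
          rw [this]; exact Real.volume_singleton
        filter_upwards [self_mem_ae_restrict measurableSet_Icc, ae_restrict_of_ae hne0]
          with x hx hx0
        have hxpos : 0 < x := lt_of_le_of_ne hx.1 (Ne.symm hx0)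
        exact hf1anti x (x + (a - t)) hxpos (by linarith)
    have hfinal : (∫ x in (0:ℝ)..(t - s), f1 x) ≤ ∫ v in (0:ℝ)..m, f1 v := by
      apply intervalIntegral.integral_mono_interval (le_refl (0:ℝ)) (by linarith) hlenm
      · filter_upwards [self_mem_ae_restrict measurableSet_Ioc] with x hx
        exact hf1nonneg x hx.1
      · exact hIf1 m hmpos
    calc (∫ u in (0:ℝ)..a, g u) = ∫ u in Set.Ioc 0 a, g u := hLHSeq
      _ ≤ ∫ u in Set.Ioc 0 a, c * ξ * (Set.Ioc s t).indicator (fun u => f1 (a - u)) u := hbound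
      _ = c * ξ * ∫ u in Set.Ioc s t, f1 (a - u) := hindeq
      _ = c * ξ * ∫ x in (0:ℝ)..(t - s), f1 (x + (a - t)) := by rw [hchg]
      _ ≤ c * ξ * ∫ x in (0:ℝ)..(t - s), f1 x := mul_le_mul_of_nonneg_left htrans hcξ
      _ ≤ c * ξ * ∫ v in (0:ℝ)..m, f1 v := mul_le_mul_of_nonneg_left hfinal hcξ
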